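/- Let w ∈ [0,b]^n, g ∈ ℝ^n, A = {i : (w_i = 0 and g_i > 0) or (w_i = b and g_i < 0)}, and d̃_i = 0 for i ∈ A, d̃_i = -g_i otherwise. If d̃ ≠ 0, then d = d̃/‖d̃‖_2 minimizes ⟨g, d'⟩ over all feasible directions d' at w with ‖d'‖_2 ≤ 1. -/

import Mathlib

open Set Finset

/-- For `w ∈ [0,b]ⁿ` and `g ∈ ℝⁿ`, let `d̃` be obtained from `-g` by zeroing out the active
set `A = {i : (wᵢ = 0 ∧ gᵢ > 0) ∨ (wᵢ = b ∧ gᵢ < 0)}`. If `d̃ ≠ 0`, then `d = d̃ / ‖d̃‖₂`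
minimizes `⟨g, d'⟩` over all feasible directions `d'` at `w` with `‖d'‖₂ ≤ 1`. -/
theorem projected_negative_gradient_steepest {n : ℕ} (b : ℝ) (hb : 0 < b)
    (w g : Fin n → ℝ) (hw : ∀ i, w i ∈ Icc (0 : ℝ) b)
    (d : Fin n → ℝ)
    (hd : ∀ i, d i = if (w i = 0 ∧ 0 < g i) ∨ (w i = b ∧ g i < 0) then 0 else -g i)
    (hdne : d ≠ 0) :
    ∀ d' : Fin n → ℝ,
      (∃ η₀ > (0 : ℝ), ∀ η : ℝ, 0 < η → η ≤ η₀ → ∀ i, w i + η * d' i ∈ Icc (0 : ℝ) b) →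
      Real.sqrt (∑ i, d' i ^ 2) ≤ 1 →
      ∑ i, g i * (d i / Real.sqrt (∑ j, d j ^ 2)) ≤ ∑ i, g i * d' i := by
  rintro d' ⟨η₀, hη₀, hfeas⟩ hnorm
  set S := Real.sqrt (∑ j, d j ^ 2) with hS
  set S' := Real.sqrt (∑ j, d' j ^ 2) with hS'
  have hSsq : S ^ 2 = ∑ j, d j ^ 2 := Real.sq_sqrt (by positivity)
  have hS'sq : S' ^ 2 = ∑ j, d' j ^ 2 := Real.sq_sqrt (by positivity)
  have hS'nonneg : 0 ≤ S' := Real.sqrt_nonneg _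
  have hSpos : 0 < S := by
    rw [hS]
    apply Real.sqrt_pos.2
    by_contra h
    push_neg at h
    have hz : ∑ j, d j ^ 2 = 0 := le_antisymm h (by positivity)
    have hz' := (Finset.sum_eq_zero_iff_of_nonneg (fun i _ => sq_nonneg _)).1 hz
    exact hdne (funext fun i => by
      have := hz' i (Finset.mem_univ i)
      exact pow_eq_zero_iff (by norm_num) |>.1 this)
  -- value of ⟨g, d⟩
  have hgd : ∑ i, g i * d i = -(∑ i, d i ^ 2) := by
    rw [← Finset.sum_neg_distrib]
    apply Finset.sum_congr rfl
    intro i _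
    rw [hd i]
    split
    · simp
    · ring
  have hLHS : ∑ i, g i * (d i / S) = -S := by
    have h1 : ∑ i, g i * (d i / S) = (∑ i, g i * d i) / S := by
      rw [Finset.sum_div]
      exact Finset.sum_congr rfl fun i _ => by ring
    rw [h1, hgd, ← hSsq]
    field_simp
  -- per-coordinate bound using feasibility
  have key : ∀ i, -(d i * d' i) ≤ g i * d' i := by
    intro i
    rw [hd i]
    split
    case isTrue h =>
      simp only [zero_mul, neg_zero]
      rcases h with ⟨hw0, hg⟩ | ⟨hwb, hg⟩
      · have hmem := hfeas η₀ hη₀ le_rfl i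
        rw [hw0] at hmem
        have h0 : 0 ≤ η₀ * d' i := by linarith [hmem.1]
        have hd'i : 0 ≤ d' i := by nlinarith
        exact mul_nonneg hg.le hd'i
      · have hmem := hfeas η₀ hη₀ le_rfl i
        rw [hwb] at hmem
        have h0 : η₀ * d' i ≤ 0 := by linarith [hmem.2]
        have hd'i : d' i ≤ 0 := by nlinarith
        nlinarith
    case isFalse h =>
      apply le_of_eq
      ring
  have hsum : -(∑ i, d i * d' i) ≤ ∑ i, g i * d' i := by
    rw [← Finset.sum_neg_distrib]
    exact Finset.sum_le_sum fun i _ => key i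
  -- Cauchy–Schwarz
  have hCS : ∑ i, d i * d' i ≤ S * S' := by
    have h1 := Finset.sum_mul_sq_le_sq_mul_sq Finset.univ d d'
    calc ∑ i, d i * d' i ≤ |∑ i, d i * d' i| := le_abs_self _
      _ = Real.sqrt ((∑ i, d i * d' i) ^ 2) := (Real.sqrt_sq_eq_abs _).symm
      _ ≤ Real.sqrt ((∑ j, d j ^ 2) * ∑ j, d' j ^ 2) := Real.sqrt_le_sqrt h1
      _ = S * S' := Real.sqrt_mul (by positivity) _
  have hfinal : S * S' ≤ S := by
    nlinarith
  rw [hLHS]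
  linarith
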